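/- Norm-bounded identification error theorem: Let X̃⁺ ∈ ℝ^{n×T} and Ψ̃ ∈ ℝ^{k×T} with Ψ̃ of full row rank, and let E_{X⁺}, E_Ψ be perturbation matrices whose columns have Euclidean norms at most ε_x and ε respectively. Assume σ_min(Ψ̃) > √T·ε. Define Ĝ = X̃⁺Ψ̃ᵀ(Ψ̃Ψ̃ᵀ)⁻¹ and G = (X̃⁺+E_{X⁺})(Ψ̃+E_Ψ)ᵀ[(Ψ̃+E_Ψ)(Ψ̃+E_Ψ)ᵀ]⁻¹. Then ‖G − Ĝ‖₂ ≤ T·(‖Ĝ‖₂·Γ_W + Γ_Y)/(σ_min(Ψ̃) − √T·ε)², where Γ_Y = σ_max(X̃⁺)ε/√T + σ_max(Ψ̃)ε_x/√T + ε_x·ε and Γ_W = 2ε·σ_max(Ψ̃)/√T + ε². -/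

import Mathlib

open scoped RealInnerProductSpace

noncomputable def opNorm {m n : ℕ} (M : Matrix (Fin m) (Fin n) ℝ) : ℝ :=
  ‖LinearMap.toContinuousLinearMap (Matrix.toEuclideanLin (𝕜 := ℝ) M)‖

noncomputable def lamMin {k : ℕ} (S : Matrix (Fin k) (Fin k) ℝ) : ℝ :=
  ⨅ x : {x : EuclideanSpace ℝ (Fin k) // ‖x‖ = 1},
    ⟪(Matrix.toEuclideanLin (𝕜 := ℝ) S) x.1, x.1⟫

noncomputable def lamMax {k : ℕ} (S : Matrix (Fin k) (Fin k) ℝ) : ℝ :=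
  ⨆ x : {x : EuclideanSpace ℝ (Fin k) // ‖x‖ = 1},
    ⟪(Matrix.toEuclideanLin (𝕜 := ℝ) S) x.1, x.1⟫

noncomputable def sigmaMax {m n : ℕ} (M : Matrix (Fin m) (Fin n) ℝ) : ℝ := opNorm M

noncomputable def sigmaMin {m n : ℕ} (M : Matrix (Fin m) (Fin n) ℝ) : ℝ :=
  Real.sqrt (lamMin (M * M.transpose))

section Aux

open scoped Matrix.Norms.L2Operator
open Matrix

lemma opNorm_eq {m n : ℕ} (M : Matrix (Fin m) (Fin n) ℝ) : opNorm M = ‖M‖ := rfl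

lemma le_opNorm' {a b : ℕ} (M : Matrix (Fin a) (Fin b) ℝ) (x : EuclideanSpace ℝ (Fin b)) :
    ‖toEuclideanLin (𝕜 := ℝ) M x‖ ≤ ‖M‖ * ‖x‖ :=
  ((Matrix.toEuclideanLin (𝕜 := ℝ) (m := Fin a) (n := Fin b)).trans
    LinearMap.toContinuousLinearMap M).le_opNorm x

lemma opNorm_le_frob {a b : ℕ} (M : Matrix (Fin a) (Fin b) ℝ) (c : ℝ) (hc : 0 ≤ c)
    (h : ∑ i, ∑ j, M i j ^ 2 ≤ c ^ 2) : ‖M‖ ≤ c := by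
  rw [Matrix.l2_opNorm_def]
  refine ContinuousLinearMap.opNorm_le_bound _ hc fun x => ?_
  have hx2 : ‖x‖ ^ 2 = ∑ j, x j ^ 2 := by
    rw [EuclideanSpace.norm_eq, Real.sq_sqrt (by positivity)]
    simp [sq_abs]
  have hMx : ‖(Matrix.toEuclideanLin (𝕜 := ℝ) M) x‖ ^ 2 ≤ (c * ‖x‖) ^ 2 := by
    have hn : ‖(Matrix.toEuclideanLin (𝕜 := ℝ) M) x‖ ^ 2 = ∑ i, (M *ᵥ (fun j => x j)) i ^ 2 := by
      rw [EuclideanSpace.norm_eq, Real.sq_sqrt (by positivity)]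
      simp [Matrix.toEuclideanLin_apply, sq_abs]
    rw [hn]
    have hCS : ∀ i, (M *ᵥ (fun j => x j)) i ^ 2 ≤ (∑ j, M i j ^ 2) * ∑ j, x j ^ 2 := by
      intro i
      simpa [Matrix.mulVec, dotProduct] using
        Finset.sum_mul_sq_le_sq_mul_sq Finset.univ (fun j => M i j) (fun j => x j)
    calc ∑ i, (M *ᵥ (fun j => x j)) i ^ 2 ≤ ∑ i, (∑ j, M i j ^ 2) * ∑ j, x j ^ 2 :=
          Finset.sum_le_sum fun i _ => hCS i
      _ = (∑ i, ∑ j, M i j ^ 2) * ∑ j, x j ^ 2 := by rw [← Finset.sum_mul]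
      _ ≤ c ^ 2 * ‖x‖ ^ 2 := by
          rw [← hx2]; exact mul_le_mul_of_nonneg_right h (by positivity)
      _ = (c * ‖x‖) ^ 2 := by ring
  exact (pow_le_pow_iff_left₀ (norm_nonneg _) (by positivity) two_ne_zero).1 hMx

lemma inner_mul_transpose' {a b : ℕ} (M : Matrix (Fin a) (Fin b) ℝ)
    (x y : EuclideanSpace ℝ (Fin a)) :
    ⟪toEuclideanLin (M * Mᵀ) x, y⟫ = ⟪toEuclideanLin Mᵀ x, toEuclideanLin Mᵀ y⟫ := by
  have he : toEuclideanLin (M * Mᵀ) x = toEuclideanLin (𝕜 := ℝ) M (toEuclideanLin Mᵀ x) := by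
    simp [Matrix.toEuclideanLin_apply, Matrix.mulVec_mulVec]
  rw [he]
  have h : Matrix.toEuclideanLin (𝕜 := ℝ) M = LinearMap.adjoint (toEuclideanLin Mᵀ) := by
    rw [← Matrix.toEuclideanLin_conjTranspose_eq_adjoint,
      Matrix.conjTranspose_eq_transpose_of_trivial, Matrix.transpose_transpose]
  rw [h, LinearMap.adjoint_inner_left]

lemma sigmaMin_mul_norm_le {a b : ℕ} (M : Matrix (Fin a) (Fin b) ℝ)
    (x : EuclideanSpace ℝ (Fin a)) :
    sigmaMin M * ‖x‖ ≤ ‖toEuclideanLin (𝕜 := ℝ) Mᵀ x‖ := by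
  rcases eq_or_ne x 0 with rfl | hx
  · simp
  · have hnx : (0:ℝ) < ‖x‖ := norm_pos_iff.2 hx
    set u : EuclideanSpace ℝ (Fin a) := ‖x‖⁻¹ • x with hu
    have hun : ‖u‖ = 1 := by
      rw [hu, norm_smul]; simp [abs_of_pos (inv_pos.2 hnx), inv_mul_cancel₀ hnx.ne']
    have hbdd : BddBelow (Set.range fun z : {z : EuclideanSpace ℝ (Fin a) // ‖z‖ = 1} =>
        ⟪(Matrix.toEuclideanLin (𝕜 := ℝ) (M * Mᵀ)) z.1, z.1⟫) := by
      refine ⟨0, ?_⟩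
      rintro _ ⟨z, rfl⟩
      simp only [inner_mul_transpose']
      exact real_inner_self_nonneg
    have h1 : lamMin (M * Mᵀ) ≤ ‖toEuclideanLin (𝕜 := ℝ) Mᵀ u‖ ^ 2 := by
      have := ciInf_le hbdd (⟨u, hun⟩ : {z : EuclideanSpace ℝ (Fin a) // ‖z‖ = 1})
      rwa [inner_mul_transpose', real_inner_self_eq_norm_sq] at this
    have h2 : sigmaMin M ≤ ‖toEuclideanLin (𝕜 := ℝ) Mᵀ u‖ := by
      have := Real.sqrt_le_sqrt h1
      rwa [Real.sqrt_sq (norm_nonneg _)] at this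
    have h3 : ‖toEuclideanLin (𝕜 := ℝ) Mᵀ u‖ = ‖x‖⁻¹ * ‖toEuclideanLin (𝕜 := ℝ) Mᵀ x‖ := by
      rw [hu, LinearMap.map_smul, norm_smul]
      simp [abs_of_pos (inv_pos.2 hnx)]
    rw [h3] at h2
    calc sigmaMin M * ‖x‖ ≤ (‖x‖⁻¹ * ‖toEuclideanLin (𝕜 := ℝ) Mᵀ x‖) * ‖x‖ :=
          mul_le_mul_of_nonneg_right h2 hnx.le
      _ = ‖toEuclideanLin (𝕜 := ℝ) Mᵀ x‖ := by field_simp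

lemma posDef_of_lower {a b : ℕ} (A : Matrix (Fin a) (Fin b) ℝ) (c : ℝ) (hc : 0 < c)
    (hlow : ∀ x : EuclideanSpace ℝ (Fin a), c * ‖x‖ ≤ ‖toEuclideanLin (𝕜 := ℝ) Aᵀ x‖) :
    (A * Aᵀ).PosDef := by
  rw [Matrix.posDef_iff_dotProduct_mulVec]
  constructor
  · have := Matrix.isHermitian_mul_conjTranspose_self A
    rwa [Matrix.conjTranspose_eq_transpose_of_trivial] at this
  · intro x hx
    have hsx : star x = x := by simp
    have hdot : star x ⬝ᵥ ((A * Aᵀ) *ᵥ x) = (Aᵀ *ᵥ x) ⬝ᵥ (Aᵀ *ᵥ x) := by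
      rw [hsx, ← Matrix.mulVec_mulVec, dotProduct_mulVec, ← Matrix.mulVec_transpose]
    rw [hdot]
    have hne : Aᵀ *ᵥ x ≠ 0 := by
      intro h0
      set x' : EuclideanSpace ℝ (Fin a) := (WithLp.equiv 2 _).symm x with hx'
      have hx'0 : x' ≠ 0 := fun h => hx (by
        have := congrArg (WithLp.equiv 2 _) h
        simpa [hx'] using this)
      have hlin : toEuclideanLin (𝕜 := ℝ) Aᵀ x' = (WithLp.equiv 2 _).symm (Aᵀ *ᵥ x) := rfl
      have hle := hlow x'
      have h00 : ‖toEuclideanLin (𝕜 := ℝ) Aᵀ x'‖ = 0 := by rw [hlin, h0]; simp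
      rw [h00] at hle
      have hxpos : (0:ℝ) < ‖x'‖ := norm_pos_iff.2 hx'0
      nlinarith
    have hnonneg : (0:ℝ) ≤ (Aᵀ *ᵥ x) ⬝ᵥ (Aᵀ *ᵥ x) :=
      Finset.sum_nonneg fun i _ => mul_self_nonneg _
    have hzero : (Aᵀ *ᵥ x) ⬝ᵥ (Aᵀ *ᵥ x) ≠ 0 := by
      rw [Ne, dotProduct_self_eq_zero]
      exact hne
    exact lt_of_le_of_ne hnonneg (Ne.symm hzero)

lemma inv_opNorm_le {a b : ℕ} (A : Matrix (Fin a) (Fin b) ℝ) (c : ℝ) (hc : 0 < c)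
    (hdet : IsUnit (A * Aᵀ).det)
    (hlow : ∀ x : EuclideanSpace ℝ (Fin a), c * ‖x‖ ≤ ‖toEuclideanLin (𝕜 := ℝ) Aᵀ x‖) :
    ‖(A * Aᵀ)⁻¹‖ ≤ 1 / c ^ 2 := by
  rw [Matrix.l2_opNorm_def]
  refine ContinuousLinearMap.opNorm_le_bound _ (by positivity) fun x => ?_
  show ‖toEuclideanLin (𝕜 := ℝ) (A * Aᵀ)⁻¹ x‖ ≤ 1 / c ^ 2 * ‖x‖
  set y := toEuclideanLin (𝕜 := ℝ) (A * Aᵀ)⁻¹ x with hy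
  have hSy : toEuclideanLin (𝕜 := ℝ) (A * Aᵀ) y = x := by
    rw [hy]
    have : toEuclideanLin (𝕜 := ℝ) (A * Aᵀ) (toEuclideanLin (𝕜 := ℝ) (A * Aᵀ)⁻¹ x)
        = toEuclideanLin (𝕜 := ℝ) ((A * Aᵀ) * (A * Aᵀ)⁻¹) x := by
      simp [Matrix.toEuclideanLin_apply, Matrix.mulVec_mulVec]
    rw [this, Matrix.mul_nonsing_inv _ hdet]
    simp [Matrix.toEuclideanLin_apply]
  rcases eq_or_lt_of_le (norm_nonneg y) with h0 | hypos
  · rw [← h0]; positivity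
  · have h1 : c ^ 2 * ‖y‖ ^ 2 ≤ ‖toEuclideanLin (𝕜 := ℝ) Aᵀ y‖ ^ 2 := by
      have h := pow_le_pow_left₀ (by positivity : (0:ℝ) ≤ c * ‖y‖) (hlow y) 2
      calc c ^ 2 * ‖y‖ ^ 2 = (c * ‖y‖) ^ 2 := by ring
        _ ≤ _ := h
    have h2 : ‖toEuclideanLin (𝕜 := ℝ) Aᵀ y‖ ^ 2 = ⟪x, y⟫ := by
      rw [← real_inner_self_eq_norm_sq, ← inner_mul_transpose', hSy]
    have h3 : ⟪x, y⟫ ≤ ‖x‖ * ‖y‖ := real_inner_le_norm x y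
    have h4 : c ^ 2 * ‖y‖ ^ 2 ≤ ‖x‖ * ‖y‖ := by linarith [h1, h2 ▸ h1]
    rw [div_mul_eq_mul_div, le_div_iff₀ (by positivity)]
    nlinarith

lemma sq_of_sqrt_le {S e : ℝ} (hS : 0 ≤ S) (h : Real.sqrt S ≤ e) : S ≤ e ^ 2 := by
  have := pow_le_pow_left₀ (Real.sqrt_nonneg S) h 2
  rwa [Real.sq_sqrt hS] at this

-- opNorm level wrappers
lemma opNorm_nonneg {a b : ℕ} (M : Matrix (Fin a) (Fin b) ℝ) : 0 ≤ opNorm M := by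
  rw [opNorm_eq]; exact norm_nonneg M

lemma opNorm_mul_le {a b c : ℕ} (M : Matrix (Fin a) (Fin b) ℝ) (N : Matrix (Fin b) (Fin c) ℝ) :
    opNorm (M * N) ≤ opNorm M * opNorm N := by
  simp only [opNorm_eq]; exact Matrix.l2_opNorm_mul M N

lemma opNorm_add_le {a b : ℕ} (M N : Matrix (Fin a) (Fin b) ℝ) :
    opNorm (M + N) ≤ opNorm M + opNorm N := by
  simp only [opNorm_eq]; exact norm_add_le M N

lemma opNorm_sub_le {a b : ℕ} (M N : Matrix (Fin a) (Fin b) ℝ) :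
    opNorm (M - N) ≤ opNorm M + opNorm N := by
  simp only [opNorm_eq]; exact norm_sub_le M N

lemma opNorm_transpose {a b : ℕ} (M : Matrix (Fin a) (Fin b) ℝ) :
    opNorm Mᵀ = opNorm M := by
  simp only [opNorm_eq]
  rw [← Matrix.conjTranspose_eq_transpose_of_trivial, Matrix.l2_opNorm_conjTranspose]

lemma opNorm_le_frob' {a b : ℕ} (M : Matrix (Fin a) (Fin b) ℝ) (c : ℝ) (hc : 0 ≤ c)
    (h : ∑ i, ∑ j, M i j ^ 2 ≤ c ^ 2) : opNorm M ≤ c := by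
  rw [opNorm_eq]; exact opNorm_le_frob M c hc h

lemma inv_opNorm_le' {a b : ℕ} (A : Matrix (Fin a) (Fin b) ℝ) (c : ℝ) (hc : 0 < c)
    (hdet : IsUnit (A * Aᵀ).det)
    (hlow : ∀ x : EuclideanSpace ℝ (Fin a), c * ‖x‖ ≤ ‖toEuclideanLin (𝕜 := ℝ) Aᵀ x‖) :
    opNorm (A * Aᵀ)⁻¹ ≤ 1 / c ^ 2 := by
  rw [opNorm_eq]; exact inv_opNorm_le A c hc hdet hlow

lemma le_opNorm'' {a b : ℕ} (M : Matrix (Fin a) (Fin b) ℝ) (x : EuclideanSpace ℝ (Fin b)) :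
    ‖toEuclideanLin (𝕜 := ℝ) M x‖ ≤ opNorm M * ‖x‖ := by
  rw [opNorm_eq]; exact le_opNorm' M x

end Aux

open Matrix in
/-- Norm-bounded identification error (Theorem 1): `‖G − Ĝ‖₂ ≤ T(‖Ĝ‖₂ Γ_W + Γ_Y)/(σ_min(Ψ̃) − √T ε)²`. -/
theorem stmt_11 (n k T : ℕ) (hkT : k ≤ T) (hT : 1 ≤ T)
    (ε εx : ℝ) (hε : 0 ≤ ε) (hεx : 0 ≤ εx)
    (Xp EXp : Matrix (Fin n) (Fin T) ℝ) (Ψ EΨ : Matrix (Fin k) (Fin T) ℝ)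
    (hrank : Ψ.rank = k) (hPD : (Ψ * Ψ.transpose).PosDef)
    (hcolX : ∀ t, Real.sqrt (∑ i, (EXp i t) ^ 2) ≤ εx)
    (hcolΨ : ∀ t, Real.sqrt (∑ i, (EΨ i t) ^ 2) ≤ ε)
    (hPE : sigmaMin Ψ > Real.sqrt T * ε)
    (Ghat G : Matrix (Fin n) (Fin k) ℝ)
    (hGhat : Ghat = Xp * Ψ.transpose * (Ψ * Ψ.transpose)⁻¹)
    (hG : G = (Xp + EXp) * (Ψ + EΨ).transpose *
      ((Ψ + EΨ) * (Ψ + EΨ).transpose)⁻¹) :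
    opNorm (G - Ghat) ≤
      (T : ℝ) * (opNorm Ghat *
          (2 * ε * sigmaMax Ψ / Real.sqrt T + ε ^ 2) +
        (sigmaMax Xp * ε / Real.sqrt T + sigmaMax Ψ * εx / Real.sqrt T + εx * ε))
      / (sigmaMin Ψ - Real.sqrt T * ε) ^ 2 := by
  classical
  have hT0 : (0:ℝ) < T := by exact_mod_cast hT
  set s : ℝ := Real.sqrt T with hs
  have hspos : 0 < s := Real.sqrt_pos.2 hT0
  have hsT : s ^ 2 = T := Real.sq_sqrt hT0.le
  set c : ℝ := sigmaMin Ψ - s * ε with hc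
  have hcpos : 0 < c := by simp only [hc]; linarith [hPE]
  -- Frobenius bounds
  have hsumX : ∑ i, ∑ t, EXp i t ^ 2 ≤ (s * εx) ^ 2 := by
    rw [Finset.sum_comm]
    calc ∑ t, ∑ i, EXp i t ^ 2 ≤ ∑ _t : Fin T, εx ^ 2 :=
          Finset.sum_le_sum fun t _ => sq_of_sqrt_le (by positivity) (hcolX t)
      _ = T * εx ^ 2 := by simp [Finset.sum_const, mul_comm]
      _ = (s * εx) ^ 2 := by rw [mul_pow, hsT]
  have hsumE : ∑ i, ∑ t, EΨ i t ^ 2 ≤ (s * ε) ^ 2 := by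
    rw [Finset.sum_comm]
    calc ∑ t, ∑ i, EΨ i t ^ 2 ≤ ∑ _t : Fin T, ε ^ 2 :=
          Finset.sum_le_sum fun t _ => sq_of_sqrt_le (by positivity) (hcolΨ t)
      _ = T * ε ^ 2 := by simp [Finset.sum_const, mul_comm]
      _ = (s * ε) ^ 2 := by rw [mul_pow, hsT]
  have hEX : opNorm EXp ≤ s * εx := opNorm_le_frob' _ _ (by positivity) hsumX
  have hEΨ : opNorm EΨ ≤ s * ε := opNorm_le_frob' _ _ (by positivity) hsumE
  have hEΨt : opNorm EΨᵀ ≤ s * ε := by rw [opNorm_transpose]; exact hEΨ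
  have hΨt : opNorm Ψᵀ = opNorm Ψ := opNorm_transpose Ψ
  -- lower bound for the perturbed matrix
  have hlow : ∀ x : EuclideanSpace ℝ (Fin k),
      c * ‖x‖ ≤ ‖toEuclideanLin (𝕜 := ℝ) (Ψ + EΨ)ᵀ x‖ := by
    intro x
    have h1 := sigmaMin_mul_norm_le Ψ x
    have h2 : ‖toEuclideanLin (𝕜 := ℝ) EΨᵀ x‖ ≤ (s * ε) * ‖x‖ :=
      (le_opNorm'' EΨᵀ x).trans (mul_le_mul_of_nonneg_right hEΨt (norm_nonneg x))
    have h3 : toEuclideanLin (𝕜 := ℝ) Ψᵀ x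
        = toEuclideanLin (𝕜 := ℝ) (Ψ + EΨ)ᵀ x - toEuclideanLin (𝕜 := ℝ) EΨᵀ x := by
      rw [Matrix.transpose_add, map_add, LinearMap.add_apply]
      abel
    have h4 : ‖toEuclideanLin (𝕜 := ℝ) Ψᵀ x‖
        ≤ ‖toEuclideanLin (𝕜 := ℝ) (Ψ + EΨ)ᵀ x‖ + ‖toEuclideanLin (𝕜 := ℝ) EΨᵀ x‖ := by
      rw [h3]; exact norm_sub_le _ _
    have : c * ‖x‖ = sigmaMin Ψ * ‖x‖ - (s * ε) * ‖x‖ := by rw [hc]; ring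
    rw [this]
    linarith
  have hPD' : ((Ψ + EΨ) * (Ψ + EΨ)ᵀ).PosDef := posDef_of_lower _ c hcpos hlow
  have hdet' : IsUnit ((Ψ + EΨ) * (Ψ + EΨ)ᵀ).det := isUnit_iff_ne_zero.2 hPD'.det_pos.ne'
  have hdet : IsUnit (Ψ * Ψᵀ).det := isUnit_iff_ne_zero.2 hPD.det_pos.ne'
  have hinv : opNorm ((Ψ + EΨ) * (Ψ + EΨ)ᵀ)⁻¹ ≤ 1 / c ^ 2 :=
    inv_opNorm_le' _ c hcpos hdet' hlow
  -- algebraic identity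
  set ΔY : Matrix (Fin n) (Fin k) ℝ := Xp * EΨᵀ + EXp * Ψᵀ + EXp * EΨᵀ with hΔY
  set ΔS : Matrix (Fin k) (Fin k) ℝ := Ψ * EΨᵀ + EΨ * Ψᵀ + EΨ * EΨᵀ with hΔS
  have hGS : Ghat * (Ψ * Ψᵀ) = Xp * Ψᵀ := by
    rw [hGhat, Matrix.mul_assoc, Matrix.nonsing_inv_mul _ hdet, Matrix.mul_one]
  have hS'eq : (Ψ + EΨ) * (Ψ + EΨ)ᵀ = Ψ * Ψᵀ + ΔS := by
    rw [hΔS, Matrix.transpose_add, Matrix.add_mul, Matrix.mul_add, Matrix.mul_add]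
    abel
  have hnum : (Xp + EXp) * (Ψ + EΨ)ᵀ = Ghat * ((Ψ + EΨ) * (Ψ + EΨ)ᵀ) + (ΔY - Ghat * ΔS) := by
    rw [hS'eq, Matrix.mul_add, hGS, hΔY, Matrix.transpose_add, Matrix.add_mul,
      Matrix.mul_add, Matrix.mul_add]
    abel
  have hid : G - Ghat = (ΔY - Ghat * ΔS) * ((Ψ + EΨ) * (Ψ + EΨ)ᵀ)⁻¹ := by
    rw [hG, hnum, Matrix.add_mul, Matrix.mul_assoc, Matrix.mul_nonsing_inv _ hdet',
      Matrix.mul_one]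
    abel
  -- norm bounds
  have hΔYb : opNorm ΔY ≤ opNorm Xp * (s * ε) + (s * εx) * opNorm Ψ + (s * εx) * (s * ε) := by
    rw [hΔY]
    have t1 : opNorm (Xp * EΨᵀ) ≤ opNorm Xp * (s * ε) :=
      (opNorm_mul_le _ _).trans (mul_le_mul_of_nonneg_left hEΨt (opNorm_nonneg _))
    have t2 : opNorm (EXp * Ψᵀ) ≤ (s * εx) * opNorm Ψ := by
      refine (opNorm_mul_le _ _).trans ?_
      rw [hΨt]
      exact mul_le_mul_of_nonneg_right hEX (opNorm_nonneg _)
    have t3 : opNorm (EXp * EΨᵀ) ≤ (s * εx) * (s * ε) :=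
      (opNorm_mul_le _ _).trans
        (mul_le_mul hEX hEΨt (opNorm_nonneg _) (by positivity))
    calc opNorm (Xp * EΨᵀ + EXp * Ψᵀ + EXp * EΨᵀ)
        ≤ opNorm (Xp * EΨᵀ + EXp * Ψᵀ) + opNorm (EXp * EΨᵀ) := opNorm_add_le _ _
      _ ≤ opNorm (Xp * EΨᵀ) + opNorm (EXp * Ψᵀ) + opNorm (EXp * EΨᵀ) := by
          linarith [opNorm_add_le (Xp * EΨᵀ) (EXp * Ψᵀ)]
      _ ≤ _ := by linarith
  have hΔSb : opNorm ΔS ≤ opNorm Ψ * (s * ε) + (s * ε) * opNorm Ψ + (s * ε) * (s * ε) := by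
    rw [hΔS]
    have t1 : opNorm (Ψ * EΨᵀ) ≤ opNorm Ψ * (s * ε) :=
      (opNorm_mul_le _ _).trans (mul_le_mul_of_nonneg_left hEΨt (opNorm_nonneg _))
    have t2 : opNorm (EΨ * Ψᵀ) ≤ (s * ε) * opNorm Ψ := by
      refine (opNorm_mul_le _ _).trans ?_
      rw [hΨt]
      exact mul_le_mul_of_nonneg_right hEΨ (opNorm_nonneg _)
    have t3 : opNorm (EΨ * EΨᵀ) ≤ (s * ε) * (s * ε) :=
      (opNorm_mul_le _ _).trans
        (mul_le_mul hEΨ hEΨt (opNorm_nonneg _) (by positivity))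
    calc opNorm (Ψ * EΨᵀ + EΨ * Ψᵀ + EΨ * EΨᵀ)
        ≤ opNorm (Ψ * EΨᵀ + EΨ * Ψᵀ) + opNorm (EΨ * EΨᵀ) := opNorm_add_le _ _
      _ ≤ opNorm (Ψ * EΨᵀ) + opNorm (EΨ * Ψᵀ) + opNorm (EΨ * EΨᵀ) := by
          linarith [opNorm_add_le (Ψ * EΨᵀ) (EΨ * Ψᵀ)]
      _ ≤ _ := by linarith
  -- final chain
  have hmain : opNorm (G - Ghat) ≤ (opNorm ΔY + opNorm Ghat * opNorm ΔS) * (1 / c ^ 2) := by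
    rw [hid]
    refine (opNorm_mul_le _ _).trans ?_
    have h1 : opNorm (ΔY - Ghat * ΔS) ≤ opNorm ΔY + opNorm Ghat * opNorm ΔS :=
      (opNorm_sub_le _ _).trans (by linarith [opNorm_mul_le Ghat ΔS])
    exact mul_le_mul h1 hinv (opNorm_nonneg _)
      (add_nonneg (opNorm_nonneg _) (mul_nonneg (opNorm_nonneg _) (opNorm_nonneg _)))
  have hnumle : opNorm ΔY + opNorm Ghat * opNorm ΔS ≤
      (T : ℝ) * (opNorm Ghat * (2 * ε * sigmaMax Ψ / s + ε ^ 2) +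
        (sigmaMax Xp * ε / s + sigmaMax Ψ * εx / s + εx * ε)) := by
    have hGn : 0 ≤ opNorm Ghat := opNorm_nonneg _
    have hrw : (T : ℝ) * (opNorm Ghat * (2 * ε * sigmaMax Ψ / s + ε ^ 2) +
        (sigmaMax Xp * ε / s + sigmaMax Ψ * εx / s + εx * ε))
        = opNorm Ghat * (opNorm Ψ * (s * ε) + (s * ε) * opNorm Ψ + (s * ε) * (s * ε))
          + (opNorm Xp * (s * ε) + (s * εx) * opNorm Ψ + (s * εx) * (s * ε)) := by
      have : sigmaMax Ψ = opNorm Ψ := rfl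
      rw [this]
      have : sigmaMax Xp = opNorm Xp := rfl
      rw [this, ← hsT]
      field_simp
      ring
    rw [hrw]
    have := mul_le_mul_of_nonneg_left hΔSb hGn
    linarith
  calc opNorm (G - Ghat) ≤ (opNorm ΔY + opNorm Ghat * opNorm ΔS) * (1 / c ^ 2) := hmain
    _ ≤ ((T : ℝ) * (opNorm Ghat * (2 * ε * sigmaMax Ψ / s + ε ^ 2) +
        (sigmaMax Xp * ε / s + sigmaMax Ψ * εx / s + εx * ε))) * (1 / c ^ 2) :=
        mul_le_mul_of_nonneg_right hnumle (by positivity)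
    _ = _ := by rw [mul_one_div]
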